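/- arXiv:1906.08672 — 4 statements merged into one kernel-verified Lean document; each statement's English description precedes it below -/
import Mathlib

section
/- Let A, B, Q̃, Q̂, Z̃, Ẑ be n×n complex matrices with B invertible and Q̃, Q̂, Z̃, Ẑ unitary. Define Ã = Q̃*AZ̃, B̃ = Q̃*BZ̃, Q = Q̃Q̂, Z = Z̃Ẑ. Suppose r and s are rational functions defined on the spectrum of AB⁻¹, and let S ⊆ ℂⁿ be a subspace such that Q̃·S = r(AB⁻¹)·S and Q̂·S = s(ÃB̃⁻¹)·S. Then Q·S = (s·r)(AB⁻¹)·S, where s·r denotes the pointwise product. -/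
open Matrix Polynomial
section helpers
variable {n : ℕ}

lemma myConjPow (U M : Matrix (Fin n) (Fin n) ℂ) (h1 : U * Uᴴ = 1) (h2 : Uᴴ * U = 1) :
    ∀ k : ℕ, (Uᴴ * M * U) ^ k = Uᴴ * M ^ k * U
  | 0 => by simp [h2]
  | (k+1) => by
      rw [pow_succ, myConjPow U M h1 h2 k, pow_succ]
      calc Uᴴ * M ^ k * U * (Uᴴ * M * U) = Uᴴ * M ^ k * (U * Uᴴ) * M * U := by
            simp only [mul_assoc]
        _ = Uᴴ * (M ^ k * M) * U := by rw [h1]; simp only [mul_one, mul_assoc]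

lemma myConjAeval (U M : Matrix (Fin n) (Fin n) ℂ) (h1 : U * Uᴴ = 1) (h2 : Uᴴ * U = 1)
    (p : Polynomial ℂ) :
    Polynomial.aeval (Uᴴ * M * U) p = Uᴴ * Polynomial.aeval M p * U := by
  induction p using Polynomial.induction_on' with
  | add f g hf hg =>
      rw [map_add, map_add, hf, hg, mul_add, add_mul]
  | monomial k a =>
      rw [aeval_monomial, aeval_monomial, myConjPow U M h1 h2, ← Algebra.smul_def,
        ← Algebra.smul_def]
      simp [mul_smul_comm, smul_mul_assoc]

lemma myCommInv (N P : Matrix (Fin n) (Fin n) ℂ) (hN : IsUnit N) (h : N * P = P * N) :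
    P * N⁻¹ = N⁻¹ * P := by
  have h1 : N * N⁻¹ = 1 := Matrix.mul_nonsing_inv N ((Matrix.isUnit_iff_isUnit_det N).mp hN)
  have h2 : N⁻¹ * N = 1 := Matrix.nonsing_inv_mul N ((Matrix.isUnit_iff_isUnit_det N).mp hN)
  calc P * N⁻¹ = N⁻¹ * (N * P) * N⁻¹ := by rw [← mul_assoc, h2, one_mul]
    _ = N⁻¹ * (P * N) * N⁻¹ := by rw [h]
    _ = N⁻¹ * P := by simp only [mul_assoc, h1, mul_one]
end helpers

/-- Accumulation of subspace-iteration actions over two successive changes of coordinates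
(Lemma on accumulated steps).  Rational functions `r = pr/qr` and `s = ps/qs` are represented
by pairs of polynomials whose denominators evaluate to invertible matrices. -/
theorem accumulated_subspace_iteration (n : ℕ)
    (A B Qt Qh Zt Zh : Matrix (Fin n) (Fin n) ℂ)
    (hB : IsUnit B)
    (hQt : Qt ∈ Matrix.unitaryGroup (Fin n) ℂ)
    (hQh : Qh ∈ Matrix.unitaryGroup (Fin n) ℂ)
    (hZt : Zt ∈ Matrix.unitaryGroup (Fin n) ℂ)
    (hZh : Zh ∈ Matrix.unitaryGroup (Fin n) ℂ)
    (At Bt Q Z : Matrix (Fin n) (Fin n) ℂ)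
    (hAt : At = Qtᴴ * A * Zt) (hBt : Bt = Qtᴴ * B * Zt)
    (hQ : Q = Qt * Qh) (hZ : Z = Zt * Zh)
    (pr qr ps qs : Polynomial ℂ)
    (hqr : IsUnit (Polynomial.aeval (A * B⁻¹) qr))
    (hqs : IsUnit (Polynomial.aeval (At * Bt⁻¹) qs))
    (S : Submodule ℂ (Fin n → ℂ))
    (hr : Submodule.map (Matrix.mulVecLin Qt) S =
      Submodule.map (Matrix.mulVecLin
        (Polynomial.aeval (A * B⁻¹) pr * (Polynomial.aeval (A * B⁻¹) qr)⁻¹)) S)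
    (hs : Submodule.map (Matrix.mulVecLin Qh) S =
      Submodule.map (Matrix.mulVecLin
        (Polynomial.aeval (At * Bt⁻¹) ps * (Polynomial.aeval (At * Bt⁻¹) qs)⁻¹)) S) :
    Submodule.map (Matrix.mulVecLin Q) S =
      Submodule.map (Matrix.mulVecLin
        (Polynomial.aeval (A * B⁻¹) (ps * pr) *
          (Polynomial.aeval (A * B⁻¹) (qs * qr))⁻¹)) S := by
  set M := A * B⁻¹ with hM
  -- unitary facts
  have hQ1 : Qt * Qtᴴ = 1 := hQt.2
  have hQ2 : Qtᴴ * Qt = 1 := hQt.1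
  have hZ1 : Zt * Ztᴴ = 1 := hZt.2
  have hBdet := (Matrix.isUnit_iff_isUnit_det B).mp hB
  have hBB : B * B⁻¹ = 1 := Matrix.mul_nonsing_inv B hBdet
  -- Bt⁻¹
  have hBtinv : Bt⁻¹ = Ztᴴ * B⁻¹ * Qt := by
    apply Matrix.inv_eq_right_inv
    rw [hBt]
    calc Qtᴴ * B * Zt * (Ztᴴ * B⁻¹ * Qt)
        = Qtᴴ * (B * (Zt * Ztᴴ) * B⁻¹) * Qt := by simp only [mul_assoc]
      _ = 1 := by rw [hZ1, mul_one, hBB, mul_one, hQ2]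
  have hMt : At * Bt⁻¹ = Qtᴴ * M * Qt := by
    rw [hAt, hBtinv]
    calc Qtᴴ * A * Zt * (Ztᴴ * B⁻¹ * Qt)
        = Qtᴴ * (A * (Zt * Ztᴴ) * B⁻¹) * Qt := by simp only [mul_assoc]
      _ = Qtᴴ * M * Qt := by rw [hZ1, mul_one, hM]
  -- abbreviations
  set a := Polynomial.aeval M pr with ha
  set b := Polynomial.aeval M qr with hb
  set c := Polynomial.aeval M ps with hc
  set d := Polynomial.aeval M qs with hd
  have haevalS : Polynomial.aeval (At * Bt⁻¹) ps = Qtᴴ * c * Qt := by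
    rw [hMt, myConjAeval Qt M hQ1 hQ2]
  have haevalD : Polynomial.aeval (At * Bt⁻¹) qs = Qtᴴ * d * Qt := by
    rw [hMt, myConjAeval Qt M hQ1 hQ2]
  -- d is a unit
  have hQtU : IsUnit Qt := ⟨⟨Qt, Qtᴴ, hQ1, hQ2⟩, rfl⟩
  have hQtHU : IsUnit Qtᴴ := ⟨⟨Qtᴴ, Qt, hQ2, hQ1⟩, rfl⟩
  have hdU : IsUnit d := by
    have h' : IsUnit (Qtᴴ * d * Qt) := haevalD ▸ hqs
    have : d = Qt * (Qtᴴ * d * Qt) * Qtᴴ := by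
      calc d = (Qt * Qtᴴ) * d * (Qt * Qtᴴ) := by rw [hQ1]; simp
        _ = Qt * (Qtᴴ * d * Qt) * Qtᴴ := by simp only [mul_assoc]
    rw [this]
    exact (hQtU.mul h').mul hQtHU
  have hdd : d * d⁻¹ = 1 := Matrix.mul_nonsing_inv d ((Matrix.isUnit_iff_isUnit_det d).mp hdU)
  -- inverse of conjugate
  have hinvD : (Polynomial.aeval (At * Bt⁻¹) qs)⁻¹ = Qtᴴ * d⁻¹ * Qt := by
    rw [haevalD]
    apply Matrix.inv_eq_right_inv
    calc Qtᴴ * d * Qt * (Qtᴴ * d⁻¹ * Qt)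
        = Qtᴴ * (d * (Qt * Qtᴴ) * d⁻¹) * Qt := by simp only [mul_assoc]
      _ = 1 := by rw [hQ1, mul_one, hdd, mul_one, hQ2]
  -- rewrite hs
  have hs' : Submodule.map (Matrix.mulVecLin Qh) S =
      Submodule.map (Matrix.mulVecLin (Qtᴴ * (c * d⁻¹) * Qt)) S := by
    rw [hs, haevalS, hinvD]
    congr 2
    calc Qtᴴ * c * Qt * (Qtᴴ * d⁻¹ * Qt)
        = Qtᴴ * (c * (Qt * Qtᴴ) * d⁻¹) * Qt := by simp only [mul_assoc]
      _ = Qtᴴ * (c * d⁻¹) * Qt := by rw [hQ1, mul_one]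
  -- split maps
  have mapmul : ∀ (X Y : Matrix (Fin n) (Fin n) ℂ) (T : Submodule ℂ (Fin n → ℂ)),
      Submodule.map (Matrix.mulVecLin (X * Y)) T =
        Submodule.map (Matrix.mulVecLin X) (Submodule.map (Matrix.mulVecLin Y) T) := by
    intro X Y T
    rw [Matrix.mulVecLin_mul, Submodule.map_comp]
  calc Submodule.map (Matrix.mulVecLin Q) S
      = Submodule.map (Matrix.mulVecLin Qt) (Submodule.map (Matrix.mulVecLin Qh) S) := by
        rw [hQ, mapmul]
    _ = Submodule.map (Matrix.mulVecLin (Qt * (Qtᴴ * (c * d⁻¹) * Qt))) S := by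
        rw [hs', ← mapmul]
    _ = Submodule.map (Matrix.mulVecLin (c * d⁻¹ * Qt)) S := by
        congr 2
        calc Qt * (Qtᴴ * (c * d⁻¹) * Qt) = (Qt * Qtᴴ) * (c * d⁻¹) * Qt := by
              simp only [mul_assoc]
          _ = c * d⁻¹ * Qt := by rw [hQ1, one_mul]
    _ = Submodule.map (Matrix.mulVecLin (c * d⁻¹))
          (Submodule.map (Matrix.mulVecLin Qt) S) := mapmul _ _ _
    _ = Submodule.map (Matrix.mulVecLin (c * d⁻¹ * (a * b⁻¹))) S := by
        rw [hr, ← mapmul]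
    _ = Submodule.map (Matrix.mulVecLin
          (Polynomial.aeval M (ps * pr) * (Polynomial.aeval M (qs * qr))⁻¹)) S := by
        congr 2
        have hcomm : ∀ p q : Polynomial ℂ,
            Polynomial.aeval M p * Polynomial.aeval M q
              = Polynomial.aeval M q * Polynomial.aeval M p := by
          intro p q
          rw [← _root_.map_mul, ← _root_.map_mul, mul_comm]
        have hda : d⁻¹ * a = a * d⁻¹ := (myCommInv d a hdU (hcomm qs pr)).symm
        have hdb : b⁻¹ * d⁻¹ = d⁻¹ * b⁻¹ := by
          rw [← Matrix.mul_inv_rev, ← Matrix.mul_inv_rev, hcomm qs qr]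
        rw [_root_.map_mul, _root_.map_mul, Matrix.mul_inv_rev]
        calc c * d⁻¹ * (a * b⁻¹) = c * (d⁻¹ * a) * b⁻¹ := by simp only [mul_assoc]
          _ = c * (a * d⁻¹) * b⁻¹ := by rw [hda]
          _ = c * a * (d⁻¹ * b⁻¹) := by simp only [mul_assoc]
          _ = c * a * (b⁻¹ * d⁻¹) := by rw [hdb]
end

section
/- Let (A, B) be a proper n×n upper Hessenberg pair with first pole σ₁ = a₂₁/b₂₁, and suppose ρ ∈ ℂ is such that (A - ρB)e₁ and (A - σ₁B)e₁ are both nonzero multiples related by a unitary core transformation: if Q₁ is a unitary matrix acting only on coordinates 1,2 with Q₁*(A - ρB)e₁ = γe₁ for some γ ≠ 0, and (A - σ₁B)e₁ = γ̌e₁ with γ̌ ≠ 0, then Q₁e₁ = δ·(A - ρB)(A - σ₁B)⁻¹e₁ for some nonzero scalar δ. -/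
open Matrix

/-- Proposition: the core transformation `Q₁` replacing the first pole `σ₁` by `ρ` satisfies
`Q₁ e₁ = δ (A - ρB)(A - σ₁B)⁻¹ e₁` for some nonzero `δ`. -/
theorem type_one_move_first_column (n : ℕ)
    (A B Q₁ : Matrix (Fin (n + 2)) (Fin (n + 2)) ℂ)
    (hA : ∀ i k : Fin (n + 2), (k : ℕ) + 1 < (i : ℕ) → A i k = 0)
    (hB : ∀ i k : Fin (n + 2), (k : ℕ) + 1 < (i : ℕ) → B i k = 0)
    (σ₁ ρ γ γc : ℂ)
    (hQ₁ : Q₁ ∈ Matrix.unitaryGroup (Fin (n + 2)) ℂ)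
    (hcore : ∀ i k : Fin (n + 2), (1 < (i : ℕ) ∨ 1 < (k : ℕ)) →
      Q₁ i k = (1 : Matrix (Fin (n + 2)) (Fin (n + 2)) ℂ) i k)
    (hγ : γ ≠ 0)
    (hq : (Q₁ᴴ).mulVec ((A - ρ • B).mulVec ((Pi.single 0 1 : Fin (n + 2) → ℂ))) = γ • (Pi.single 0 1 : Fin (n + 2) → ℂ))
    (hγc : γc ≠ 0)
    (hσ : (A - σ₁ • B).mulVec ((Pi.single 0 1 : Fin (n + 2) → ℂ)) = γc • (Pi.single 0 1 : Fin (n + 2) → ℂ))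
    (hinv : IsUnit (A - σ₁ • B)) :
    ∃ δ : ℂ, δ ≠ 0 ∧
      Q₁.mulVec ((Pi.single 0 1 : Fin (n + 2) → ℂ)) =
        δ • ((A - ρ • B) * (A - σ₁ • B)⁻¹).mulVec ((Pi.single 0 1 : Fin (n + 2) → ℂ)) := by
  set e₁ : Fin (n + 2) → ℂ := (Pi.single 0 1 : Fin (n + 2) → ℂ) with he
  have hQ : Q₁ * Q₁ᴴ = 1 := Matrix.mem_unitaryGroup_iff.mp hQ₁
  -- (A - ρB) e₁ = γ • Q₁ e₁
  have h1 : (A - ρ • B).mulVec e₁ = γ • Q₁.mulVec e₁ := by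
    have := congrArg (Q₁.mulVec) hq
    rwa [Matrix.mulVec_mulVec, hQ, Matrix.one_mulVec, Matrix.mulVec_smul] at this
  -- (A - σ₁B)⁻¹ e₁ = γc⁻¹ • e₁
  have h2 : (A - σ₁ • B)⁻¹.mulVec e₁ = γc⁻¹ • e₁ := by
    have h := congrArg ((A - σ₁ • B)⁻¹.mulVec) hσ
    rw [Matrix.mulVec_mulVec,
      Matrix.nonsing_inv_mul _ ((Matrix.isUnit_iff_isUnit_det _).mp hinv),
      Matrix.one_mulVec, Matrix.mulVec_smul] at h
    apply smul_right_injective (Fin (n + 2) → ℂ) hγc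
    show γc • ((A - σ₁ • B)⁻¹.mulVec e₁) = γc • (γc⁻¹ • e₁)
    rw [← h, smul_smul, mul_inv_cancel₀ hγc, one_smul]
  refine ⟨γc * γ⁻¹, by simp [hγ, hγc], ?_⟩
  rw [← Matrix.mulVec_mulVec, h2, Matrix.mulVec_smul, h1, smul_smul, smul_smul]
  rw [show γc * γ⁻¹ * γc⁻¹ * γ = 1 by field_simp, one_smul]
end

section
/- Let (A, B) be a proper n×n upper Hessenberg pair with last pole σ_{n-1} = a_{n,n-1}/b_{n,n-1}, and let τ ∈ ℂ. Suppose Z_{n-1} is a unitary matrix acting only on coordinates n-1, n with eₙᵀ(A - τB)Z_{n-1} = γeₙᵀ for some γ ≠ 0, and eₙᵀ(A - σ_{n-1}B) = γ̌eₙᵀ with γ̌ ≠ 0 and A - σ_{n-1}B invertible. Then eₙᵀZ_{n-1}* = δ·eₙᵀ(A - σ_{n-1}B)⁻¹(A - τB) for some nonzero scalar δ. -/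
open Matrix

/-- Proposition: the core transformation `Z_{n-1}` replacing the last pole `σ_{n-1}` by `τ`
satisfies `eₙᵀ Z_{n-1}* = δ eₙᵀ (A - σ_{n-1}B)⁻¹(A - τB)` for some nonzero `δ`. -/
theorem type_one_move_last_row (n : ℕ)
    (A B Z : Matrix (Fin (n + 2)) (Fin (n + 2)) ℂ)
    (hA : ∀ i k : Fin (n + 2), (k : ℕ) + 1 < (i : ℕ) → A i k = 0)
    (hB : ∀ i k : Fin (n + 2), (k : ℕ) + 1 < (i : ℕ) → B i k = 0)
    (σ τ γ γc : ℂ)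
    (hZ : Z ∈ Matrix.unitaryGroup (Fin (n + 2)) ℂ)
    (hcore : ∀ i k : Fin (n + 2), ((i : ℕ) < n ∨ (k : ℕ) < n) →
      Z i k = (1 : Matrix (Fin (n + 2)) (Fin (n + 2)) ℂ) i k)
    (hγ : γ ≠ 0)
    (hz : Matrix.vecMul (Pi.single (Fin.last (n + 1)) 1 : Fin (n + 2) → ℂ)
        ((A - τ • B) * Z) = γ • (Pi.single (Fin.last (n + 1)) 1 : Fin (n + 2) → ℂ))
    (hγc : γc ≠ 0)
    (hσ : Matrix.vecMul (Pi.single (Fin.last (n + 1)) 1 : Fin (n + 2) → ℂ) (A - σ • B) =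
      γc • (Pi.single (Fin.last (n + 1)) 1 : Fin (n + 2) → ℂ))
    (hinv : IsUnit (A - σ • B)) :
    ∃ δ : ℂ, δ ≠ 0 ∧
      Matrix.vecMul (Pi.single (Fin.last (n + 1)) 1 : Fin (n + 2) → ℂ) Zᴴ =
        δ • Matrix.vecMul (Pi.single (Fin.last (n + 1)) 1 : Fin (n + 2) → ℂ)
          ((A - σ • B)⁻¹ * (A - τ • B)) := by
  set e : Fin (n + 2) → ℂ := (Pi.single (Fin.last (n + 1)) 1 : Fin (n + 2) → ℂ) with he
  have hdet : IsUnit (A - σ • B).det := (Matrix.isUnit_iff_isUnit_det _).mp hinv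
  have hZZ : Z * Zᴴ = 1 := (Matrix.mem_unitaryGroup_iff).mp hZ
  have h1 : Matrix.vecMul e (A - τ • B) = γ • Matrix.vecMul e Zᴴ := by
    have := congrArg (fun v => Matrix.vecMul v Zᴴ) hz
    simpa [Matrix.vecMul_vecMul, Matrix.mul_assoc, hZZ, Matrix.smul_vecMul, eq_comm] using this
  have h2 : Matrix.vecMul e (A - σ • B)⁻¹ = γc⁻¹ • e := by
    have := congrArg (fun v => Matrix.vecMul v (A - σ • B)⁻¹) hσ
    simp only [Matrix.vecMul_vecMul, Matrix.mul_nonsing_inv _ hdet,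
      Matrix.smul_vecMul, Matrix.vecMul_one] at this
    exact (eq_inv_smul_iff₀ hγc).mpr this.symm
  refine ⟨γ⁻¹ * γc, by simp [hγ, hγc], ?_⟩
  rw [← Matrix.vecMul_vecMul, h2, Matrix.smul_vecMul, h1, smul_smul, smul_smul]
  rw [show γ⁻¹ * γc * γc⁻¹ * γ = 1 by field_simp, one_smul]
end

section
/- Let A, B be 2×2 upper triangular with A = [[α₁, a],[0, α₂]], B = [[β₁, b],[0, β₂]], and suppose x = (α₂b - β₂a, β₂α₁ - α₂β₁)ᵀ ≠ 0. Let Z be a 2×2 unitary matrix with Z e₁ = γ⁻¹x where γ = ‖x‖, and let Q be a 2×2 unitary matrix whose first column is proportional to y = (α₁b - β₁a, β₂α₁ - α₂β₁)ᵀ (which is nonzero). Then Â = Q*AZ and B̂ = Q*BZ are both upper triangular, with Âe₁ parallel to α₂e₁ and B̂e₁ parallel to β₂e₁; in particular â₁₁/b̂₁₁ = α₂/β₂ provided β₂ ≠ 0. -/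
open Matrix

/-- Correctness of the swapping procedure (exact method 1): the transformed pencil is upper
triangular with the eigenvalue `α₂/β₂` on top. -/
theorem swap_procedure_correct (α₁ α₂ β₁ β₂ a b : ℂ)
    (A B Q Z : Matrix (Fin 2) (Fin 2) ℂ)
    (hA : A = !![α₁, a; 0, α₂]) (hB : B = !![β₁, b; 0, β₂])
    (x y : Fin 2 → ℂ)
    (hx : x = ![α₂ * b - β₂ * a, β₂ * α₁ - α₂ * β₁])
    (hy : y = ![α₁ * b - β₁ * a, β₂ * α₁ - α₂ * β₁])
    (hxne : x ≠ 0) (hyne : y ≠ 0)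
    (hZu : Z ∈ Matrix.unitaryGroup (Fin 2) ℂ)
    (hQu : Q ∈ Matrix.unitaryGroup (Fin 2) ℂ)
    (γ : ℝ) (hγ : γ = Real.sqrt (‖x 0‖ ^ 2 + ‖x 1‖ ^ 2))
    (hZ : ∀ i : Fin 2, Z i 0 = (γ : ℂ)⁻¹ * x i)
    (c : ℂ) (hc : c ≠ 0)
    (hQ : ∀ i : Fin 2, Q i 0 = c * y i) :
    (Qᴴ * A * Z) 1 0 = 0 ∧ (Qᴴ * B * Z) 1 0 = 0 ∧
      ∃ t : ℂ, t ≠ 0 ∧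
        (Qᴴ * A * Z).mulVec (Pi.single 0 1 : Fin 2 → ℂ) =
            (t * α₂) • (Pi.single 0 1 : Fin 2 → ℂ) ∧
        (Qᴴ * B * Z).mulVec (Pi.single 0 1 : Fin 2 → ℂ) =
            (t * β₂) • (Pi.single 0 1 : Fin 2 → ℂ) ∧
        (β₂ ≠ 0 → (Qᴴ * A * Z) 0 0 * β₂ = (Qᴴ * B * Z) 0 0 * α₂) := by
  -- γ is positive
  have hγpos : 0 < γ := by
    rw [hγ]
    apply Real.sqrt_pos.2
    have hx' : x 0 ≠ 0 ∨ x 1 ≠ 0 := by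
      by_contra h
      push_neg at h
      exact hxne (funext fun i => by fin_cases i <;> simp [h.1, h.2])
    rcases hx' with h | h
    · have := norm_pos_iff.mpr h
      have := norm_nonneg (x 1)
      nlinarith
    · have := norm_pos_iff.mpr h
      have := norm_nonneg (x 0)
      nlinarith
  have hγC : (γ : ℂ) ≠ 0 := by exact_mod_cast hγpos.ne'
  -- Orthogonality relations from star Q * Q = 1
  have hQ1 : star Q * Q = 1 := hQu.1
  have h10 : (starRingEnd ℂ) (Q 0 1) * y 0 + (starRingEnd ℂ) (Q 1 1) * y 1 = 0 := by
    have h := congrFun (congrFun hQ1 1) 0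
    simp only [Matrix.mul_apply, Fin.sum_univ_two, Matrix.star_apply, Matrix.one_apply,
      hQ 0, hQ 1, Complex.star_def] at h
    norm_num at h
    have h' : c * ((starRingEnd ℂ) (Q 0 1) * y 0 + (starRingEnd ℂ) (Q 1 1) * y 1) = 0 := by
      linear_combination h
    exact (mul_eq_zero.1 h').resolve_left hc
  have h00 : (starRingEnd ℂ) (Q 0 0) * y 0 + (starRingEnd ℂ) (Q 1 0) * y 1 = c⁻¹ := by
    have h := congrFun (congrFun hQ1 0) 0
    simp only [Matrix.mul_apply, Fin.sum_univ_two, Matrix.star_apply, Matrix.one_apply,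
      hQ 0, hQ 1, Complex.star_def, _root_.map_mul] at h
    norm_num at h
    rw [hQ 0, hQ 1]
    simp only [_root_.map_mul]
    field_simp
    linear_combination h
  -- columns of A*Z and B*Z
  have hAZ : ∀ j : Fin 2, (A * Z) j 0 = (γ : ℂ)⁻¹ * α₂ * y j := by
    intro j
    fin_cases j <;>
      simp [Matrix.mul_apply, Fin.sum_univ_two, hA, hZ 0, hZ 1, hx, hy] <;> ring
  have hBZ : ∀ j : Fin 2, (B * Z) j 0 = (γ : ℂ)⁻¹ * β₂ * y j := by
    intro j
    fin_cases j <;>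
      simp [Matrix.mul_apply, Fin.sum_univ_two, hB, hZ 0, hZ 1, hx, hy] <;> ring
  -- entries of the transformed matrices
  have hQA : ∀ i : Fin 2, (Qᴴ * A * Z) i 0 =
      (γ : ℂ)⁻¹ * α₂ * ((starRingEnd ℂ) (Q 0 i) * y 0 + (starRingEnd ℂ) (Q 1 i) * y 1) := by
    intro i
    rw [Matrix.mul_assoc, Matrix.mul_apply, Fin.sum_univ_two, Matrix.conjTranspose_apply,
      Matrix.conjTranspose_apply, hAZ 0, hAZ 1]
    simp only [Complex.star_def]
    ring
  have hQB : ∀ i : Fin 2, (Qᴴ * B * Z) i 0 =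
      (γ : ℂ)⁻¹ * β₂ * ((starRingEnd ℂ) (Q 0 i) * y 0 + (starRingEnd ℂ) (Q 1 i) * y 1) := by
    intro i
    rw [Matrix.mul_assoc, Matrix.mul_apply, Fin.sum_univ_two, Matrix.conjTranspose_apply,
      Matrix.conjTranspose_apply, hBZ 0, hBZ 1]
    simp only [Complex.star_def]
    ring
  have hA10 : (Qᴴ * A * Z) 1 0 = 0 := by rw [hQA 1, h10]; ring
  have hB10 : (Qᴴ * B * Z) 1 0 = 0 := by rw [hQB 1, h10]; ring
  have hA00 : (Qᴴ * A * Z) 0 0 = (γ : ℂ)⁻¹ * c⁻¹ * α₂ := by rw [hQA 0, h00]; ring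
  have hB00 : (Qᴴ * B * Z) 0 0 = (γ : ℂ)⁻¹ * c⁻¹ * β₂ := by rw [hQB 0, h00]; ring
  refine ⟨hA10, hB10, (γ : ℂ)⁻¹ * c⁻¹,
    mul_ne_zero (inv_ne_zero hγC) (inv_ne_zero hc), ?_, ?_, fun _ => by
      rw [hA00, hB00]; ring⟩
  · funext i
    fin_cases i <;>
      simp [Matrix.mulVec, dotProduct, Fin.sum_univ_two, Pi.single, hA00, hA10] <;> ring
  · funext i
    fin_cases i <;>
      simp [Matrix.mulVec, dotProduct, Fin.sum_univ_two, Pi.single, hB00, hB10] <;> ring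
end
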